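/- For every natural number n ≥ 1, the coefficients λ_n^k of C_n(X) satisfy: λ_n^{n+1} = n/(n+1); λ_n^n = 0; for every integer k with 1 ≤ k ≤ n−1, λ_n^k = −(1/(n+1))·binom(n+1, k)·(2i)^{n+1−k}·β_{n+1−k}; and λ_n^0 = 2·(1 − 2^{n+1})·i^{n+1}·β_{n+1}/(n+1). Here binom denotes the binomial coefficient. -/

import Mathlib

open Polynomial Finset

/-- The pair of polynomial sequences (Aₙ, Cₙ) from the paper:
A₀ = X, C₀ = 0, and
A_{n+1} = ((n+1)/(n+2))·(X·Aₙ + ∑_{k=0}^{n} λₙᵏ·A_k),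
C_{n+1} = ((n+1)/(n+2))·((X²+1)·Xⁿ + ∑_{k=0}^{n} λₙᵏ·C_k),
where λₙᵏ is the coefficient of Xᵏ in Cₙ. -/
noncomputable def AC : ℕ → Polynomial ℂ × Polynomial ℂ
  | 0 => (Polynomial.X, 0)
  | (n+1) =>
    (((n+1 : ℂ)/(n+2)) • (Polynomial.X * (AC n).1 +
        ∑ k ∈ (Finset.range (n+1)).attach, ((AC n).2.coeff k) • (AC k).1),
     ((n+1 : ℂ)/(n+2)) • ((Polynomial.X^2 + 1) * Polynomial.X^n +
        ∑ k ∈ (Finset.range (n+1)).attach, ((AC n).2.coeff k) • (AC k).2))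
  decreasing_by
  all_goals first
    | exact Nat.lt_succ_self n
    | exact Nat.lt_succ_of_lt (Finset.mem_range.mp k.2)
    | exact Finset.mem_range.mp k.2

noncomputable def polyA (n : ℕ) : Polynomial ℂ := (AC n).1
noncomputable def polyC (n : ℕ) : Polynomial ℂ := (AC n).2

namespace Stmt11Aux

/-- binomial convolution of Bernoulli numbers -/
noncomputable def bconv (m : ℕ) : ℚ :=
  ∑ k ∈ range (m+1), (m.choose k : ℚ) * _root_.bernoulli k * _root_.bernoulli (m - k)

lemma sum_range_bernoulli (m : ℕ) :
    ∑ j ∈ range m, (m.choose j : ℚ) * _root_.bernoulli j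
      = (if m = 1 then (1:ℚ) else 0) := _root_.sum_bernoulli m

/-- key double-sum computation -/
lemma Rlem (m : ℕ) :
    ∑ j ∈ range m, ((m.choose j : ℚ)) * bconv j = m * _root_.bernoulli (m - 1) := by
  rcases Nat.eq_zero_or_pos m with hm | hm
  · subst hm; simp
  have h1 : ∀ j ∈ range m, (m.choose j : ℚ) * bconv j
      = ∑ k ∈ range (j+1), (m.choose j : ℚ) * (j.choose k : ℚ)
          * _root_.bernoulli k * _root_.bernoulli (j - k) := by
    intro j _
    rw [bconv, Finset.mul_sum]
    refine Finset.sum_congr rfl fun k _ => by ring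
  rw [Finset.sum_congr rfl h1]
  have h2 : (∑ j ∈ range m, ∑ k ∈ range (j+1), (m.choose j : ℚ) * (j.choose k : ℚ)
          * _root_.bernoulli k * _root_.bernoulli (j - k))
      = ∑ k ∈ range m, ∑ j ∈ Finset.Ico k m, (m.choose j : ℚ) * (j.choose k : ℚ)
          * _root_.bernoulli k * _root_.bernoulli (j - k) := by
    have h := (Finset.sum_Ico_Ico_comm 0 m
      (fun k j => (m.choose j : ℚ) * (j.choose k : ℚ) * _root_.bernoulli k * _root_.bernoulli (j - k))).symm
    simp only [Finset.range_eq_Ico]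
    exact h
  rw [h2]
  have h3 : ∀ k ∈ range m, (∑ j ∈ Finset.Ico k m, (m.choose j : ℚ) * (j.choose k : ℚ)
          * _root_.bernoulli k * _root_.bernoulli (j - k))
      = (m.choose k : ℚ) * _root_.bernoulli k * (if m - k = 1 then 1 else 0) := by
    intro k hk
    rw [Finset.mem_range] at hk
    rw [Finset.sum_Ico_eq_sum_range]
    have h4 : ∀ l ∈ range (m - k), (m.choose (k+l) : ℚ) * ((k+l).choose k : ℚ)
          * _root_.bernoulli k * _root_.bernoulli ((k+l) - k)
        = (m.choose k : ℚ) * (((m-k).choose l : ℚ) * _root_.bernoulli l) * _root_.bernoulli k := by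
      intro l hl
      rw [Finset.mem_range] at hl
      have hc : m.choose (k+l) * (k+l).choose k = m.choose k * (m-k).choose l := by
        have := Nat.choose_mul (n := m) (k := k+l) (s := k) (by omega)
        simpa [Nat.add_sub_cancel_left] using this
      have hcq : (m.choose (k+l) : ℚ) * ((k+l).choose k : ℚ)
          = (m.choose k : ℚ) * ((m-k).choose l : ℚ) := by exact_mod_cast congrArg (Nat.cast (R := ℚ)) hc
      rw [Nat.add_sub_cancel_left]
      calc (m.choose (k+l) : ℚ) * ((k+l).choose k : ℚ) * _root_.bernoulli k * _root_.bernoulli l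
          = ((m.choose (k+l) : ℚ) * ((k+l).choose k : ℚ)) * _root_.bernoulli k * _root_.bernoulli l := by ring
        _ = ((m.choose k : ℚ) * ((m-k).choose l : ℚ)) * _root_.bernoulli k * _root_.bernoulli l := by rw [hcq]
        _ = (m.choose k : ℚ) * (((m-k).choose l : ℚ) * _root_.bernoulli l) * _root_.bernoulli k := by ring
    rw [Finset.sum_congr rfl h4, ← Finset.sum_mul, ← Finset.mul_sum, sum_range_bernoulli]
    ring
  rw [Finset.sum_congr rfl h3]
  have h5 : ∀ k ∈ range m, (m.choose k : ℚ) * _root_.bernoulli k * (if m - k = 1 then 1 else 0)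
      = if k = m - 1 then (m.choose k : ℚ) * _root_.bernoulli k else 0 := by
    intro k hk
    rw [Finset.mem_range] at hk
    by_cases h : k = m - 1
    · subst h; rw [if_pos (by omega), if_pos rfl, mul_one]
    · rw [if_neg (by omega), if_neg h, mul_zero]
  rw [Finset.sum_congr rfl h5, Finset.sum_ite_eq' (range m) (m-1)
    (fun k => (m.choose k : ℚ) * _root_.bernoulli k), if_pos (Finset.mem_range.mpr (by omega))]
  have hcs : m.choose (m-1) = m := by
    have h := Nat.choose_symm (n := m) (k := 1) hm
    simpa [Nat.choose_one_right] using h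
  rw [hcs]



lemma P1lem (m : ℕ) : ∑ j ∈ range m, ((m+1).choose j : ℚ) * _root_.bernoulli j
    = (if m = 0 then (1:ℚ) else 0) - (m+1) * _root_.bernoulli m := by
  have h := _root_.sum_bernoulli (m+1)
  rw [sum_range_succ, Nat.choose_succ_self_right] at h
  have : (if m + 1 = 1 then (1:ℚ) else 0) = (if m = 0 then (1:ℚ) else 0) := by
    by_cases hm : m = 0 <;> simp [hm]
  rw [this] at h
  push_cast at h ⊢
  linarith

lemma P2lem (m : ℕ) : ∑ j ∈ range m, ((m+1).choose j : ℚ) * j * _root_.bernoulli (j-1)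
    = (m+1) * ((if m = 1 then (1:ℚ) else 0) - m * _root_.bernoulli (m-1)) := by
  rcases m with _ | M
  · simp
  -- m = M+1
  have h0 : ∑ j ∈ range (M+1), ((M+2).choose j : ℚ) * j * _root_.bernoulli (j-1)
      = ∑ l ∈ range M, ((M+2).choose (l+1) : ℚ) * (l+1) * _root_.bernoulli l := by
    rw [Finset.sum_range_succ']
    simp
  rw [h0]
  have h1 : ∀ l ∈ range M, ((M+2).choose (l+1) : ℚ) * (l+1) * _root_.bernoulli l
      = ((M+2):ℚ) * (((M+1).choose l : ℚ) * _root_.bernoulli l) := by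
    intro l _
    have hc : (M+2) * ((M+1).choose l) = (M+2).choose (l+1) * (l+1) := by
      exact_mod_cast Nat.add_one_mul_choose_eq (M+1) l
    have hcq : ((M+2):ℚ) * (((M+1).choose l : ℚ)) = ((M+2).choose (l+1) : ℚ) * ((l:ℚ)+1) := by
      exact_mod_cast congrArg (Nat.cast (R := ℚ)) hc
    calc ((M+2).choose (l+1) : ℚ) * ((l:ℚ)+1) * _root_.bernoulli l
        = (((M+2).choose (l+1) : ℚ) * ((l:ℚ)+1)) * _root_.bernoulli l := by ring
      _ = (((M+2):ℚ) * (((M+1).choose l : ℚ))) * _root_.bernoulli l := by rw [← hcq]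
      _ = ((M+2):ℚ) * (((M+1).choose l : ℚ) * _root_.bernoulli l) := by ring
  rw [Finset.sum_congr rfl h1, ← Finset.mul_sum]
  have h2 : ∑ l ∈ range M, ((M+1).choose l : ℚ) * _root_.bernoulli l
      = (if M+1 = 1 then (1:ℚ) else 0) - (M+1) * _root_.bernoulli M := by
    have h := _root_.sum_bernoulli (M+1)
    rw [sum_range_succ, Nat.choose_succ_self_right] at h
    push_cast at h ⊢
    linarith
  rw [h2]
  have : (if M + 1 = 1 then (1:ℚ) else 0) = (if M = 0 then (1:ℚ) else 0) := by
    by_cases hm : M = 0 <;> simp [hm]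
  rw [this]
  by_cases hM : M = 0
  · subst hM; norm_num
  · rw [if_neg hM]
    push_cast
    ring

lemma P3lem (m : ℕ) : ∑ j ∈ range m, ((m+1).choose j : ℚ) * j * _root_.bernoulli j
    = (m+1) * ((if m = 0 then (1:ℚ) else 0) - (if m = 1 then (1:ℚ) else 0) - (m+1) * _root_.bernoulli m) := by
  rcases m with _ | M
  · norm_num
  have h0 : ∑ j ∈ range (M+1), ((M+2).choose j : ℚ) * j * _root_.bernoulli j
      = ∑ l ∈ range M, ((M+2).choose (l+1) : ℚ) * (l+1) * _root_.bernoulli (l+1) := by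
    rw [Finset.sum_range_succ']
    simp
  rw [h0]
  have h1 : ∀ l ∈ range M, ((M+2).choose (l+1) : ℚ) * (l+1) * _root_.bernoulli (l+1)
      = ((M+2):ℚ) * (((M+1).choose l : ℚ) * _root_.bernoulli (l+1)) := by
    intro l _
    have hc : (M+2) * ((M+1).choose l) = (M+2).choose (l+1) * (l+1) := by
      exact_mod_cast Nat.add_one_mul_choose_eq (M+1) l
    have hcq : ((M+2):ℚ) * (((M+1).choose l : ℚ)) = ((M+2).choose (l+1) : ℚ) * ((l:ℚ)+1) := by
      exact_mod_cast congrArg (Nat.cast (R := ℚ)) hc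
    calc ((M+2).choose (l+1) : ℚ) * ((l:ℚ)+1) * _root_.bernoulli (l+1)
        = (((M+2).choose (l+1) : ℚ) * ((l:ℚ)+1)) * _root_.bernoulli (l+1) := by ring
      _ = (((M+2):ℚ) * (((M+1).choose l : ℚ))) * _root_.bernoulli (l+1) := by rw [← hcq]
      _ = ((M+2):ℚ) * (((M+1).choose l : ℚ) * _root_.bernoulli (l+1)) := by ring
  rw [Finset.sum_congr rfl h1, ← Finset.mul_sum]
  -- W' := ∑ l ∈ range M, C(M+1,l) β_{l+1} = -(M+2) β_{M+1} - (if M = 0 then 1 else 0)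
  have hW : ∑ l ∈ range M, ((M+1).choose l : ℚ) * _root_.bernoulli (l+1)
      = -(M+2) * _root_.bernoulli (M+1) - (if M = 0 then (1:ℚ) else 0) := by
    have hp : ∀ l ∈ range M, ((M+1).choose l : ℚ) * _root_.bernoulli (l+1)
        = ((M+2).choose (l+1) : ℚ) * _root_.bernoulli (l+1) - ((M+1).choose (l+1) : ℚ) * _root_.bernoulli (l+1) := by
      intro l _
      have hc : (M+2).choose (l+1) = (M+1).choose l + (M+1).choose (l+1) :=
        Nat.choose_succ_succ (M+1) l
      have : ((M+2).choose (l+1) : ℚ) = ((M+1).choose l : ℚ) + ((M+1).choose (l+1) : ℚ) := by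
        exact_mod_cast congrArg (Nat.cast (R := ℚ)) hc
      rw [this]; ring
    rw [Finset.sum_congr rfl hp, Finset.sum_sub_distrib]
    have e1 : ∑ l ∈ range M, ((M+2).choose (l+1) : ℚ) * _root_.bernoulli (l+1)
        = (∑ j ∈ range (M+1), ((M+2).choose j : ℚ) * _root_.bernoulli j) - 1 := by
      rw [Finset.sum_range_succ']
      simp
    have e2 : ∑ l ∈ range M, ((M+1).choose (l+1) : ℚ) * _root_.bernoulli (l+1)
        = (∑ j ∈ range (M+1), ((M+1).choose j : ℚ) * _root_.bernoulli j) - 1 := by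
      rw [Finset.sum_range_succ']
      simp
    rw [e1, e2, P1lem (M+1), _root_.sum_bernoulli (M+1)]
    have : (if M + 1 = 1 then (1:ℚ) else 0) = (if M = 0 then (1:ℚ) else 0) := by
      by_cases hm : M = 0 <;> simp [hm]
    rw [this]
    have : (if M + 1 = 0 then (1:ℚ) else 0) = 0 := by simp
    rw [this]
    push_cast
    ring
  rw [hW]
  by_cases hM : M = 0
  · subst hM; norm_num
  · rw [if_neg hM, if_neg (by omega : ¬ M + 1 = 0), if_neg (by omega : ¬ M + 1 = 1)]
    push_cast
    ring



lemma Llem (m : ℕ) :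
    ∑ j ∈ range m, ((m+1).choose j : ℚ) * ((1 - (j:ℚ)) * _root_.bernoulli j - (j:ℚ) * _root_.bernoulli (j-1))
      = m*((m:ℚ)+1)*(_root_.bernoulli m + _root_.bernoulli (m-1)) := by
  have hsplit : ∀ j ∈ range m, ((m+1).choose j : ℚ) * ((1 - (j:ℚ)) * _root_.bernoulli j - (j:ℚ) * _root_.bernoulli (j-1))
      = ((m+1).choose j : ℚ) * _root_.bernoulli j - ((m+1).choose j : ℚ) * j * _root_.bernoulli j
        - ((m+1).choose j : ℚ) * j * _root_.bernoulli (j-1) := by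
    intro j _; ring
  rw [Finset.sum_congr rfl hsplit, Finset.sum_sub_distrib, Finset.sum_sub_distrib,
    P1lem m, P2lem m, P3lem m]
  by_cases h0 : m = 0
  · subst h0; norm_num
  by_cases h1 : m = 1
  · subst h1; norm_num
  rw [if_neg h0, if_neg h1]
  ring

lemma bconv_eq (m : ℕ) :
    bconv m = (1 - (m:ℚ)) * _root_.bernoulli m - (m:ℚ) * _root_.bernoulli (m-1) := by
  induction m using Nat.strong_induction_on with
  | _ m ih =>
  have hR := Rlem (m+1)
  rw [sum_range_succ, Nat.choose_succ_self_right] at hR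
  have hsum : ∑ j ∈ range m, ((m+1).choose j : ℚ) * bconv j
      = ∑ j ∈ range m, ((m+1).choose j : ℚ) * ((1 - (j:ℚ)) * _root_.bernoulli j - (j:ℚ) * _root_.bernoulli (j-1)) :=
    Finset.sum_congr rfl fun j hj => by rw [ih j (Finset.mem_range.mp hj)]
  rw [hsum, Llem m] at hR
  have hmm : _root_.bernoulli (m + 1 - 1) = _root_.bernoulli m := by norm_num
  rw [hmm] at hR
  have hne : ((m:ℚ)+1) ≠ 0 := by positivity
  push_cast at hR
  have key : ((m:ℚ)+1) * bconv m = ((m:ℚ)+1) * ((1 - (m:ℚ)) * _root_.bernoulli m - (m:ℚ) * _root_.bernoulli (m-1)) := by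
    nlinarith [hR]
  exact mul_left_cancel₀ hne key



noncomputable def shalf (m : ℕ) : ℚ :=
  ∑ k ∈ range (m+1), (m.choose k : ℚ) * 2^k * _root_.bernoulli k

lemma Vlem (m : ℕ) : ∑ j ∈ range m, (m.choose j : ℚ) * shalf j
    = 2^m * (if m = 1 then (1:ℚ) else 0) - shalf m + 2^m * _root_.bernoulli m := by
  have h1 : ∀ j ∈ range m, (m.choose j : ℚ) * shalf j
      = ∑ k ∈ range (j+1), (m.choose j : ℚ) * (j.choose k : ℚ) * 2^k * _root_.bernoulli k := by
    intro j _
    rw [shalf, Finset.mul_sum]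
    exact Finset.sum_congr rfl fun k _ => by ring
  rw [Finset.sum_congr rfl h1]
  have h2 : (∑ j ∈ range m, ∑ k ∈ range (j+1), (m.choose j : ℚ) * (j.choose k : ℚ)
          * 2^k * _root_.bernoulli k)
      = ∑ k ∈ range m, ∑ j ∈ Finset.Ico k m, (m.choose j : ℚ) * (j.choose k : ℚ)
          * 2^k * _root_.bernoulli k := by
    have h := (Finset.sum_Ico_Ico_comm 0 m
      (fun k j => (m.choose j : ℚ) * (j.choose k : ℚ) * 2^k * _root_.bernoulli k)).symm
    simp only [Finset.range_eq_Ico]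
    exact h
  rw [h2]
  have h3 : ∀ k ∈ range m, (∑ j ∈ Finset.Ico k m, (m.choose j : ℚ) * (j.choose k : ℚ)
          * 2^k * _root_.bernoulli k)
      = (m.choose k : ℚ) * 2^m * _root_.bernoulli k - (m.choose k : ℚ) * 2^k * _root_.bernoulli k := by
    intro k hk
    rw [Finset.mem_range] at hk
    rw [Finset.sum_Ico_eq_sum_range]
    have h4 : ∀ l ∈ range (m - k), (m.choose (k+l) : ℚ) * ((k+l).choose k : ℚ)
          * 2^k * _root_.bernoulli k
        = (m.choose k : ℚ) * 2^k * _root_.bernoulli k * ((m-k).choose l : ℚ) := by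
      intro l hl
      rw [Finset.mem_range] at hl
      have hc : m.choose (k+l) * (k+l).choose k = m.choose k * (m-k).choose l := by
        have := Nat.choose_mul (n := m) (k := k+l) (s := k) (by omega)
        simpa [Nat.add_sub_cancel_left] using this
      have hcq : (m.choose (k+l) : ℚ) * ((k+l).choose k : ℚ)
          = (m.choose k : ℚ) * ((m-k).choose l : ℚ) := by
        exact_mod_cast congrArg (Nat.cast (R := ℚ)) hc
      calc (m.choose (k+l) : ℚ) * ((k+l).choose k : ℚ) * 2^k * _root_.bernoulli k
          = ((m.choose (k+l) : ℚ) * ((k+l).choose k : ℚ)) * 2^k * _root_.bernoulli k := by ring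
        _ = ((m.choose k : ℚ) * ((m-k).choose l : ℚ)) * 2^k * _root_.bernoulli k := by rw [hcq]
        _ = (m.choose k : ℚ) * 2^k * _root_.bernoulli k * ((m-k).choose l : ℚ) := by ring
    rw [Finset.sum_congr rfl h4, ← Finset.mul_sum]
    have h5 : ∑ l ∈ range (m - k), ((m-k).choose l : ℚ) = 2^(m-k) - 1 := by
      have h6 : m - k = (m - k - 1) + 1 := by omega
      rw [h6]
      have h7 := Nat.sum_range_choose (m - k - 1 + 1)
      rw [sum_range_succ, Nat.choose_self] at h7
      have : (∑ i ∈ range (m - k - 1 + 1), ((m - k - 1 + 1).choose i : ℚ)) + 1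
          = 2^(m - k - 1 + 1) := by exact_mod_cast congrArg (Nat.cast (R := ℚ)) h7
      linarith
    rw [h5]
    have h8 : (2:ℚ)^k * (2^(m-k) - 1) = 2^m - 2^k := by
      have hexp : k + (m-k) = m := by omega
      rw [mul_sub, mul_one, ← pow_add, hexp]
    calc (m.choose k : ℚ) * 2^k * _root_.bernoulli k * (2^(m-k) - 1)
        = (m.choose k : ℚ) * _root_.bernoulli k * (2^k * (2^(m-k) - 1)) := by ring
      _ = (m.choose k : ℚ) * _root_.bernoulli k * (2^m - 2^k) := by rw [h8]
      _ = (m.choose k : ℚ) * 2^m * _root_.bernoulli k - (m.choose k : ℚ) * 2^k * _root_.bernoulli k := by ring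
  rw [Finset.sum_congr rfl h3, Finset.sum_sub_distrib]
  have e1 : ∑ k ∈ range m, (m.choose k : ℚ) * 2^m * _root_.bernoulli k
      = 2^m * ∑ k ∈ range m, (m.choose k : ℚ) * _root_.bernoulli k := by
    rw [Finset.mul_sum]
    exact Finset.sum_congr rfl fun k _ => by ring
  have e2 : ∑ k ∈ range m, (m.choose k : ℚ) * 2^k * _root_.bernoulli k
      = shalf m - 2^m * _root_.bernoulli m := by
    rw [shalf, sum_range_succ, Nat.choose_self]
    push_cast
    ring
  rw [e1, e2, _root_.sum_bernoulli m]
  by_cases h : m = 1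
  · subst h; norm_num; ring
  · rw [if_neg h]; ring

lemma shalf_eq (m : ℕ) : shalf m = (2 - 2^m) * _root_.bernoulli m := by
  induction m using Nat.strong_induction_on with
  | _ m ih =>
  have hV := Vlem (m+1)
  rw [sum_range_succ, Nat.choose_succ_self_right] at hV
  have hsum : ∑ j ∈ range m, ((m+1).choose j : ℚ) * shalf j
      = ∑ j ∈ range m, ((m+1).choose j : ℚ) * ((2 - 2^j) * _root_.bernoulli j) :=
    Finset.sum_congr rfl fun j hj => by rw [ih j (Finset.mem_range.mp hj)]
  rw [hsum] at hV
  have hsum2 : ∑ j ∈ range m, ((m+1).choose j : ℚ) * ((2 - 2^j) * _root_.bernoulli j)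
      = 2 * ((if m = 0 then (1:ℚ) else 0) - (m+1) * _root_.bernoulli m)
        - (shalf (m+1) - ((m+1).choose (m+1) : ℚ) * 2^(m+1) * _root_.bernoulli (m+1)
            - ((m+1).choose m : ℚ) * 2^m * _root_.bernoulli m) := by
    have expand : ∀ j ∈ range m, ((m+1).choose j : ℚ) * ((2 - 2^j) * _root_.bernoulli j)
        = 2 * (((m+1).choose j : ℚ) * _root_.bernoulli j) - ((m+1).choose j : ℚ) * 2^j * _root_.bernoulli j := by
      intro j _; ring
    rw [Finset.sum_congr rfl expand, Finset.sum_sub_distrib, ← Finset.mul_sum, P1lem m]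
    congr 1
    rw [shalf, sum_range_succ, sum_range_succ]
    ring
  rw [hsum2, Nat.choose_self, Nat.choose_succ_self_right] at hV
  -- now solve for shalf (m+1) pieces : note shalf (m+1) appears on both sides
  by_cases h0 : m = 0
  · subst h0
    simp only [if_pos rfl] at hV
    have : shalf 0 = 1 := by simp [shalf]
    rw [show (2:ℚ) - 2^0 = 1 by norm_num, this, _root_.bernoulli_zero]
    ring
  · rw [if_neg h0, if_neg (by omega : ¬ m + 1 = 1)] at hV
    push_cast at hV
    have target : shalf m = (2 - 2^m) * _root_.bernoulli m := by
      have hne : ((m:ℚ)+1) ≠ 0 := by positivity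
      have key : ((m:ℚ)+1) * shalf m = ((m:ℚ)+1) * ((2 - 2^m) * _root_.bernoulli m) := by
        nlinarith [hV]
      exact mul_left_cancel₀ hne key
    exact target



noncomputable def bc (m : ℕ) : ℂ := ((_root_.bernoulli m : ℚ) : ℂ)
noncomputable def gc (m k : ℕ) : ℂ := (m.choose k : ℂ) * (2*Complex.I)^(m-k) * bc (m-k)
noncomputable def Gp (m : ℕ) : Polynomial ℂ :=
  ∑ k ∈ range (m+1), Polynomial.C (gc m k) * Polynomial.X^k

lemma gc_eq_zero {m k : ℕ} (h : m < k) : gc m k = 0 := by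
  rw [gc, Nat.choose_eq_zero_of_lt h]
  simp

lemma gc_self (m : ℕ) : gc m m = 1 := by
  simp [gc, bc]

lemma coeff_Gp (m k : ℕ) : (Gp m).coeff k = gc m k := by
  rw [Gp, Polynomial.finset_sum_coeff]
  by_cases hk : k ≤ m
  · rw [Finset.sum_eq_single k]
    · simp
    · intro j _ hjk
      rw [Polynomial.coeff_C_mul, Polynomial.coeff_X_pow, if_neg (fun h => hjk h.symm), mul_zero]
    · intro h
      exact absurd (Finset.mem_range.mpr (by omega)) h
  · rw [Finset.sum_eq_zero, gc_eq_zero (by omega)]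
    intro j hj
    rw [Finset.mem_range] at hj
    rw [Polynomial.coeff_C_mul, Polynomial.coeff_X_pow, if_neg (by omega), mul_zero]

lemma bconv_cast (M : ℕ) :
    ∑ l ∈ range (M+1), (M.choose l : ℂ) * bc l * bc (M - l)
      = (1 - (M:ℂ)) * bc M - (M:ℂ) * bc (M-1) := by
  have h := bconv_eq M
  rw [bconv] at h
  have := congrArg (fun q : ℚ => (q : ℂ)) h
  push_cast at this
  simpa [bc] using this

lemma lhs_eval (N t : ℕ) (ht : t ≤ N+1) :
    ∑ j ∈ range (N+2), gc (N+1) j * gc j t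
      = ((N+1).choose t : ℂ) * (2*Complex.I)^(N+1-t) *
          ((1 - ((N+1-t : ℕ):ℂ)) * bc (N+1-t) - ((N+1-t : ℕ):ℂ) * bc (N+1-t-1)) := by
  set M := N + 1 - t with hM
  -- drop terms j < t
  have hzero : ∀ j ∈ range (N+2), j ∉ Finset.Ico t (N+2) → gc (N+1) j * gc j t = 0 := by
    intro j hj hj2
    rw [Finset.mem_range] at hj
    rw [Finset.mem_Ico] at hj2
    have : j < t := by omega
    rw [gc_eq_zero this, mul_zero]
  have hsub : Finset.Ico t (N+2) ⊆ range (N+2) := by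
    intro j hj
    rw [Finset.mem_Ico] at hj
    exact Finset.mem_range.mpr hj.2
  rw [← Finset.sum_subset hsub hzero, Finset.sum_Ico_eq_sum_range]
  have hcard : N + 2 - t = M + 1 := by omega
  rw [hcard]
  have hterm : ∀ l ∈ range (M+1), gc (N+1) (t+l) * gc (t+l) t
      = ((N+1).choose t : ℂ) * (2*Complex.I)^M * ((M.choose l : ℂ) * bc l * bc (M - l)) := by
    intro l hl
    rw [Finset.mem_range] at hl
    rw [gc, gc]
    have h1 : (N+1) - (t+l) = M - l := by omega
    have h2 : (t+l) - t = l := by omega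
    rw [h1, h2]
    have hc : (N+1).choose (t+l) * (t+l).choose t = (N+1).choose t * M.choose l := by
      have := Nat.choose_mul (n := N+1) (k := t+l) (s := t) (by omega)
      rw [Nat.add_sub_cancel_left] at this
      rw [this, hM]
    have hcq : ((N+1).choose (t+l) : ℂ) * ((t+l).choose t : ℂ)
        = ((N+1).choose t : ℂ) * (M.choose l : ℂ) := by
      exact_mod_cast congrArg (Nat.cast (R := ℂ)) hc
    have hpow : (2*Complex.I)^(M-l) * (2*Complex.I)^l = (2*Complex.I)^M := by
      rw [← pow_add]
      congr 1
      omega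
    calc ((N+1).choose (t+l) : ℂ) * (2*Complex.I)^(M-l) * bc (M-l)
          * (((t+l).choose t : ℂ) * (2*Complex.I)^l * bc l)
        = (((N+1).choose (t+l) : ℂ) * ((t+l).choose t : ℂ))
            * ((2*Complex.I)^(M-l) * (2*Complex.I)^l) * bc (M-l) * bc l := by ring
      _ = (((N+1).choose t : ℂ) * (M.choose l : ℂ)) * (2*Complex.I)^M * bc (M-l) * bc l := by
          rw [hcq, hpow]
      _ = ((N+1).choose t : ℂ) * (2*Complex.I)^M * ((M.choose l : ℂ) * bc l * bc (M - l)) := by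
          ring
  rw [Finset.sum_congr rfl hterm, ← Finset.mul_sum, bconv_cast M]



lemma bc_zero : bc 0 = 1 := by simp [bc]

lemma euler_scalar (N t : ℕ) :
    ∑ j ∈ range (N+2), gc (N+1) j * gc j t
      = -(N:ℂ) * gc (N+1) t
        + ((N:ℂ)+1) * ((if t = 0 then 0 else gc N (t-1)) - 2*Complex.I * gc N t) := by
  by_cases ht : t ≤ N + 1
  case neg =>
    rw [Finset.sum_eq_zero (fun j hj => by
      rw [Finset.mem_range] at hj
      rw [gc_eq_zero (show j < t by omega), mul_zero])]
    rw [gc_eq_zero (show N+1 < t by omega), gc_eq_zero (show N < t by omega),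
      if_neg (show ¬ t = 0 by omega), gc_eq_zero (show N < t-1 by omega)]
    ring
  rcases Nat.eq_zero_or_pos t with ht0 | ht0
  · subst ht0
    rw [lhs_eval N 0 (by omega), if_pos rfl]
    simp only [Nat.sub_zero]
    rw [gc, gc, Nat.sub_zero, Nat.sub_zero, Nat.choose_zero_right, Nat.choose_zero_right]
    have h1 : (N+1) - 1 = N := by omega
    rw [h1]
    have hpow : (2*Complex.I)^(N+1) = (2*Complex.I)^N * (2*Complex.I) := pow_succ _ _
    rw [hpow]
    push_cast
    ring
  by_cases htN : t = N + 1
  · subst htN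
    rw [lhs_eval N (N+1) le_rfl, Nat.sub_self]
    rw [if_neg (by omega), gc_self, gc_eq_zero (show N < N+1 by omega)]
    have h2 : N + 1 - 1 = N := by omega
    rw [h2, gc_self, Nat.choose_self]
    simp [bc_zero]
  -- main case 1 ≤ t ≤ N
  have htN' : t ≤ N := by omega
  rw [lhs_eval N t ht, if_neg (by omega)]
  set M := N + 1 - t with hMdef
  have hM1 : M - 1 = N - t := by omega
  have hMpos : 1 ≤ M := by omega
  rw [gc, gc, gc]
  have e1 : N - (t-1) = M := by omega
  rw [e1, hM1]
  have hcast : ((M:ℕ):ℂ) = (N:ℂ) + 1 - (t:ℂ) := by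
    have : ((M:ℕ):ℂ) = ((N+1:ℕ):ℂ) - ((t:ℕ):ℂ) := by
      rw [hMdef]
      push_cast [Nat.cast_sub (by omega : t ≤ N+1)]
      ring
    rw [this]; push_cast; ring
  have hpow : (2*Complex.I)^M = 2*Complex.I * (2*Complex.I)^(N-t) := by
    rw [← hM1, ← pow_succ']
    congr 1
    omega
  have idA : ((N:ℂ)+1) * (N.choose (t-1) : ℂ) = (t:ℂ) * ((N+1).choose t : ℂ) := by
    have h := Nat.add_one_mul_choose_eq N (t-1)
    have h2 : t - 1 + 1 = t := by omega
    rw [h2] at h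
    have := congrArg (Nat.cast (R := ℂ)) h
    push_cast at this
    rw [this]; ring
  have idB : ((N:ℂ)+1) * (N.choose t : ℂ) = ((M:ℕ):ℂ) * ((N+1).choose t : ℂ) := by
    have h := Nat.choose_mul_succ_eq N t
    have := congrArg (Nat.cast (R := ℂ)) h
    push_cast [Nat.cast_sub (by omega : t ≤ N+1)] at this
    rw [hcast]
    push_cast
    linear_combination this
  rw [hpow, hcast] at *
  linear_combination (-(2*Complex.I*(2*Complex.I)^(N-t) * bc M)) * idA
    + (2*Complex.I*(2*Complex.I)^(N-t) * bc (N-t)) * idB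



lemma coeff_X_mul' (p : Polynomial ℂ) (t : ℕ) :
    (Polynomial.X * p).coeff t = if t = 0 then 0 else p.coeff (t-1) := by
  rcases t with _ | s
  · simp [Polynomial.mul_coeff_zero]
  · rw [Polynomial.coeff_X_mul, if_neg (Nat.succ_ne_zero s)]
    rfl

lemma eulerG (N : ℕ) :
    ∑ j ∈ range (N+2), Polynomial.C (gc (N+1) j) * Gp j
      = Polynomial.C (-(N:ℂ)) * Gp (N+1)
        + Polynomial.C ((N:ℂ)+1) *
            ((Polynomial.X - Polynomial.C (2*Complex.I)) * Gp N) := by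
  ext t
  rw [Polynomial.finset_sum_coeff]
  simp only [Polynomial.coeff_C_mul, coeff_Gp, Polynomial.coeff_add, sub_mul,
    Polynomial.coeff_sub, coeff_X_mul', Polynomial.coeff_C_mul]
  rw [euler_scalar N t]



noncomputable def ev (m : ℕ) : ℂ := (Gp m).eval Complex.I

noncomputable def Ep (n : ℕ) : Polynomial ℂ :=
  Polynomial.X^(n+1) - Polynomial.C Complex.I * Polynomial.X^n
    - Polynomial.C (((n:ℂ)+1)⁻¹) * (Gp (n+1) - Polynomial.C (ev (n+1)))

lemma Gp0 : Gp 0 = 1 := by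
  rw [Gp]
  simp [gc_self]

lemma bc_one : bc 1 = -(1/2 : ℂ) := by
  rw [bc, _root_.bernoulli_one]
  push_cast
  ring

lemma Gp1 : Gp 1 = Polynomial.X - Polynomial.C Complex.I := by
  rw [Gp, Finset.sum_range_succ, Finset.sum_range_one]
  have h0 : gc 1 0 = -Complex.I := by
    rw [gc]
    simp only [Nat.choose_zero_right, Nat.sub_zero, pow_one, Nat.cast_one, bc_one]
    ring
  rw [h0, gc_self, map_neg, Polynomial.C_1]
  ring

lemma ev1 : ev 1 = 0 := by
  rw [ev, Gp1]
  simp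

lemma Ep0 : Ep 0 = 0 := by
  rw [Ep, Gp1, ev1]
  norm_num

lemma S1lem (n : ℕ) :
    ∑ k ∈ range (n+1), Polynomial.C (gc (n+1) k) * Polynomial.X^k
      = Gp (n+1) - Polynomial.X^(n+1) := by
  have : Gp (n+1) = (∑ k ∈ range (n+1), Polynomial.C (gc (n+1) k) * Polynomial.X^k)
      + Polynomial.C (gc (n+1) (n+1)) * Polynomial.X^(n+1) := by
    rw [Gp, Finset.sum_range_succ]
  rw [this, gc_self]
  simp

lemma idC (n k : ℕ) : gc (n+1) k * ((k:ℂ)+1)⁻¹ = gc (n+2) (k+1) * ((n:ℂ)+2)⁻¹ := by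
  rw [gc, gc, Nat.succ_sub_succ]
  have hnat : (n+2) * ((n+1).choose k) = ((n+2).choose (k+1)) * (k+1) := by
    exact_mod_cast Nat.add_one_mul_choose_eq (n+1) k
  have hc : ((n:ℂ)+2) * ((n+1).choose k : ℂ) = ((n+2).choose (k+1) : ℂ) * ((k:ℂ)+1) := by
    exact_mod_cast congrArg (Nat.cast (R := ℂ)) hnat
  have hk : ((k:ℂ)+1) ≠ 0 := by
    have : (((k+1:ℕ)):ℂ) ≠ 0 := Nat.cast_ne_zero.mpr (by omega)
    push_cast at this
    exact this
  have hn : ((n:ℂ)+2) ≠ 0 := by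
    have : (((n+2:ℕ)):ℂ) ≠ 0 := Nat.cast_ne_zero.mpr (by omega)
    push_cast at this
    exact this
  field_simp
  linear_combination (bc (n+1-k)) * hc

lemma S3lem (n : ℕ) :
    ∑ k ∈ range (n+1), Polynomial.C (gc (n+1) k * ((k:ℂ)+1)⁻¹) * Gp (k+1)
      = -Gp (n+2) + (Polynomial.X - Polynomial.C (2*Complex.I)) * Gp (n+1)
        - Polynomial.C (((n:ℂ)+2)⁻¹ * gc (n+2) 0) := by
  have hrw : ∀ k ∈ range (n+1), Polynomial.C (gc (n+1) k * ((k:ℂ)+1)⁻¹) * Gp (k+1)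
      = Polynomial.C (((n:ℂ)+2)⁻¹) * (Polynomial.C (gc (n+2) (k+1)) * Gp (k+1)) := by
    intro k _
    rw [idC n k, map_mul]
    ring
  rw [Finset.sum_congr rfl hrw, ← Finset.mul_sum]
  have e := eulerG (n+1)
  rw [Finset.sum_range_succ, Finset.sum_range_succ'] at e
  simp only [show n+1+1 = n+2 from rfl, gc_self, Gp0, Polynomial.C_1, one_mul, mul_one] at e
  push_cast at e
  have hC2 : Polynomial.C ((n:ℂ)+1+1) = Polynomial.C ((n:ℂ)+1) + 1 := by
    rw [← Polynomial.C_1 (R := ℂ), ← map_add]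
  have hshift : ∑ k ∈ range (n+1), Polynomial.C (gc (n+2) (k+1)) * Gp (k+1)
      = -(Polynomial.C ((n:ℂ)+1)) * Gp (n+2)
        + (Polynomial.C ((n:ℂ)+1) + 1) * ((Polynomial.X - Polynomial.C (2*Complex.I)) * Gp (n+1))
        - Gp (n+2) - Polynomial.C (gc (n+2) 0) := by
    rw [map_neg] at e
    rw [hC2] at e
    linear_combination e
  rw [hshift]
  have hn : ((n:ℂ)+2) ≠ 0 := by
    have : (((n+2:ℕ)):ℂ) ≠ 0 := Nat.cast_ne_zero.mpr (by omega)
    push_cast at this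
    exact this
  have hvC : (Polynomial.C ((n:ℂ)+1) + 1) * Polynomial.C (((n:ℂ)+2)⁻¹) = 1 := by
    rw [← hC2, ← map_mul]
    have h2 : ((n:ℂ)+1+1) * ((n:ℂ)+2)⁻¹ = 1 := by
      rw [show (n:ℂ)+1+1 = (n:ℂ)+2 by ring, mul_inv_cancel₀ hn]
    rw [h2, map_one]
  have hexp : Polynomial.C (((n:ℂ)+2)⁻¹ * gc (n+2) 0)
      = Polynomial.C (((n:ℂ)+2)⁻¹) * Polynomial.C (gc (n+2) 0) := map_mul _ _ _
  rw [hexp]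
  linear_combination ((Polynomial.X - Polynomial.C (2*Complex.I)) * Gp (n+1) - Gp (n+2)) * hvC

lemma S4lem (n : ℕ) :
    ∑ k ∈ range (n+1), gc (n+1) k * ((k:ℂ)+1)⁻¹ * ev (k+1)
      = -ev (n+2) - Complex.I * ev (n+1) - ((n:ℂ)+2)⁻¹ * gc (n+2) 0 := by
  have hevd : ∀ m : ℕ, Polynomial.eval Complex.I (Gp m) = ev m := fun m => rfl
  have h := congrArg (Polynomial.eval Complex.I) (S3lem n)
  rw [Polynomial.eval_finset_sum] at h
  simp only [Polynomial.eval_mul, Polynomial.eval_C, Polynomial.eval_add, Polynomial.eval_sub,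
    Polynomial.eval_neg, Polynomial.eval_X, hevd] at h
  rw [h]
  ring



lemma coeff_Ep (n k : ℕ) : (Ep n).coeff k
    = (if k = n+1 then 1 else 0) - Complex.I * (if k = n then 1 else 0)
      - ((n:ℂ)+1)⁻¹ * (gc (n+1) k - (if k = 0 then ev (n+1) else 0)) := by
  rw [Ep]
  simp only [Polynomial.coeff_sub, Polynomial.coeff_C_mul, Polynomial.coeff_X_pow,
    coeff_Gp, Polynomial.coeff_C]

lemma Ep_succ (n : ℕ) : Ep (n+1)
    = Polynomial.X^(n+2) - Polynomial.C Complex.I * Polynomial.X^(n+1)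
      - Polynomial.C (((n:ℂ)+2)⁻¹) * (Gp (n+2) - Polynomial.C (ev (n+2))) := by
  rw [Ep]
  have : ((((n+1):ℕ)):ℂ) + 1 = (n:ℂ) + 2 := by push_cast; ring
  rw [this]

lemma PsiLem (n : ℕ) : ∑ k ∈ range (n+1), Polynomial.C (gc (n+1) k) * Ep k
    = Polynomial.X * (Gp (n+1) - Polynomial.X^(n+1))
      - Polynomial.C Complex.I * (Gp (n+1) - Polynomial.X^(n+1))
      - (-Gp (n+2) + (Polynomial.X - Polynomial.C (2*Complex.I)) * Gp (n+1)
          - Polynomial.C (((n:ℂ)+2)⁻¹ * gc (n+2) 0))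
      + Polynomial.C (-ev (n+2) - Complex.I * ev (n+1) - ((n:ℂ)+2)⁻¹ * gc (n+2) 0) := by
  have hsplit : ∀ k ∈ range (n+1), Polynomial.C (gc (n+1) k) * Ep k
      = Polynomial.C (gc (n+1) k) * Polynomial.X^(k+1)
        - Polynomial.C Complex.I * (Polynomial.C (gc (n+1) k) * Polynomial.X^k)
        - Polynomial.C (gc (n+1) k * ((k:ℂ)+1)⁻¹) * Gp (k+1)
        + Polynomial.C (gc (n+1) k * ((k:ℂ)+1)⁻¹ * ev (k+1)) := by
    intro k _
    rw [Ep, map_mul, map_mul, map_mul]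
    ring
  rw [Finset.sum_congr rfl hsplit, Finset.sum_add_distrib, Finset.sum_sub_distrib,
    Finset.sum_sub_distrib, ← Finset.mul_sum, ← map_sum]
  have hXs : ∑ k ∈ range (n+1), Polynomial.C (gc (n+1) k) * Polynomial.X^(k+1)
      = Polynomial.X * ∑ k ∈ range (n+1), Polynomial.C (gc (n+1) k) * Polynomial.X^k := by
    rw [Finset.mul_sum]
    refine Finset.sum_congr rfl fun k _ => ?_
    rw [pow_succ]
    ring
  rw [hXs, S1lem, S3lem, S4lem]

lemma mainlem (n : ℕ) :
    Polynomial.C ((n:ℂ)+1) * (∑ k ∈ range (n+1), Polynomial.C ((Ep n).coeff k) * Ep k)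
      = Polynomial.C ((n:ℂ)+2) * Ep (n+1)
        - Polynomial.C ((n:ℂ)+1) * ((Polynomial.X^2+1) * Polynomial.X^n) := by
  have hterm : ∀ k ∈ range (n+1), Polynomial.C ((Ep n).coeff k) * Ep k
      = (if k = n then Polynomial.C (-Complex.I) * Ep n else 0)
        + Polynomial.C (-(((n:ℂ)+1)⁻¹) * gc (n+1) k) * Ep k := by
    intro k hk
    rw [Finset.mem_range] at hk
    by_cases h0 : k = 0
    · subst h0
      rcases Nat.eq_zero_or_pos n with hn | hn
      · subst hn
        simp [Ep0]
      · rw [Ep0, if_neg (by omega : ¬ (0:ℕ) = n)]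
        simp
    · rw [coeff_Ep, if_neg (by omega : ¬ k = n+1), if_neg h0]
      by_cases hkn : k = n
      · subst hkn
        rw [if_pos rfl, if_pos rfl]
        simp only [map_sub, map_mul, map_neg, map_zero, map_one]
        ring
      · rw [if_neg hkn, if_neg hkn]
        simp only [map_sub, map_mul, map_neg, map_zero, map_one]
        ring
  rw [Finset.sum_congr rfl hterm, Finset.sum_add_distrib,
    Finset.sum_ite_eq' (range (n+1)) n (fun _ => Polynomial.C (-Complex.I) * Ep n),
    if_pos (Finset.self_mem_range_succ n)]
  have hsecond : ∀ k ∈ range (n+1), Polynomial.C (-(((n:ℂ)+1)⁻¹) * gc (n+1) k) * Ep k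
      = Polynomial.C (-(((n:ℂ)+1)⁻¹)) * (Polynomial.C (gc (n+1) k) * Ep k) := by
    intro k _
    rw [map_mul]
    ring
  rw [Finset.sum_congr rfl hsecond, ← Finset.mul_sum, PsiLem n, Ep_succ n]
  -- now pure algebra with relations
  have hn1 : ((n:ℂ)+1) ≠ 0 := by
    have : (((n+1:ℕ)):ℂ) ≠ 0 := Nat.cast_ne_zero.mpr (by omega)
    push_cast at this; exact this
  have hn2 : ((n:ℂ)+2) ≠ 0 := by
    have : (((n+2:ℕ)):ℂ) ≠ 0 := Nat.cast_ne_zero.mpr (by omega)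
    push_cast at this; exact this
  have hu : Polynomial.C ((n:ℂ)+1) * Polynomial.C (((n:ℂ)+1)⁻¹) = 1 := by
    rw [← map_mul, mul_inv_cancel₀ hn1, map_one]
  have hv : Polynomial.C ((n:ℂ)+2) * Polynomial.C (((n:ℂ)+2)⁻¹) = 1 := by
    rw [← map_mul, mul_inv_cancel₀ hn2, map_one]
  have hI : Polynomial.C Complex.I * Polynomial.C Complex.I = -1 := by
    rw [← map_mul, Complex.I_mul_I, map_neg, map_one]
  rw [Ep]
  simp only [map_sub, map_add, map_mul, map_neg, map_one, map_ofNat] at hu hv ⊢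
  linear_combination (Polynomial.C Complex.I * (Gp (n+1) - Polynomial.C (ev (n+1)))
      - (Polynomial.X * (Gp (n+1) - Polynomial.X^(n+1))
        - Polynomial.C Complex.I * (Gp (n+1) - Polynomial.X^(n+1))
        - (-Gp (n+2) + (Polynomial.X - 2 * Polynomial.C Complex.I) * Gp (n+1)
            - Polynomial.C (((n:ℂ)+2)⁻¹) * Polynomial.C (gc (n+2) 0))
        + (-(Polynomial.C (ev (n+2))) - Polynomial.C Complex.I * Polynomial.C (ev (n+1))
            - Polynomial.C (((n:ℂ)+2)⁻¹) * Polynomial.C (gc (n+2) 0)))) * hu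
    + ((Polynomial.C ((n:ℂ)) + 1) * Polynomial.X^n) * hI
    + (Gp (n+2) - Polynomial.C (ev (n+2))) * hv



lemma ev_eq (m : ℕ) : ev m = Complex.I^m * ((2:ℂ) - 2^m) * bc m := by
  rw [ev, Gp, Polynomial.eval_finset_sum]
  simp only [Polynomial.eval_mul, Polynomial.eval_C, Polynomial.eval_pow, Polynomial.eval_X]
  have h1 : ∀ k ∈ range (m+1), gc m k * Complex.I^k
      = Complex.I^m * ((m.choose k : ℂ) * 2^(m-k) * bc (m-k)) := by
    intro k hk
    rw [Finset.mem_range] at hk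
    rw [gc, mul_pow]
    have : Complex.I^(m-k) * Complex.I^k = Complex.I^m := by
      rw [← pow_add]
      congr 1
      omega
    calc (m.choose k : ℂ) * (2^(m-k) * Complex.I^(m-k)) * bc (m-k) * Complex.I^k
        = (Complex.I^(m-k) * Complex.I^k) * ((m.choose k : ℂ) * 2^(m-k) * bc (m-k)) := by ring
      _ = Complex.I^m * ((m.choose k : ℂ) * 2^(m-k) * bc (m-k)) := by rw [this]
  rw [Finset.sum_congr rfl h1, ← Finset.mul_sum]
  have h2 : ∑ k ∈ range (m+1), ((m.choose k : ℂ) * 2^(m-k) * bc (m-k))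
      = ∑ k ∈ range (m+1), ((m.choose k : ℂ) * 2^k * bc k) := by
    have := Finset.sum_range_reflect (fun k => (m.choose k : ℂ) * 2^k * bc k) (m+1)
    rw [← this]
    refine Finset.sum_congr rfl fun k hk => ?_
    rw [Finset.mem_range] at hk
    have e1 : m + 1 - 1 - k = m - k := by omega
    rw [e1]
    congr 2
    rw [Nat.choose_symm (by omega)]
  rw [h2]
  have h3 : ∑ k ∈ range (m+1), ((m.choose k : ℂ) * 2^k * bc k) = ((shalf m : ℚ) : ℂ) := by
    rw [shalf]
    push_cast
    rfl
  rw [h3, shalf_eq]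
  push_cast [bc]
  ring

lemma polyC_eq (n : ℕ) : polyC n = Ep n := by
  induction n using Nat.strong_induction_on with
  | _ n ih =>
  match n with
  | 0 =>
    have : polyC 0 = 0 := by rw [polyC, AC]
    rw [this, Ep0]
  | (m+1) =>
    have hAC : ∀ k, (AC k).2 = polyC k := fun k => rfl
    have hrec : polyC (m+1) = ((m+1 : ℂ)/(m+2)) • ((Polynomial.X^2 + 1) * Polynomial.X^m +
        ∑ k ∈ (Finset.range (m+1)).attach, ((polyC m).coeff (k:ℕ)) • polyC (k:ℕ)) := by
      rw [polyC, AC]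
      simp only [hAC]
    rw [hrec]
    have hat : ∑ k ∈ (Finset.range (m+1)).attach, ((polyC m).coeff (k:ℕ)) • polyC (k:ℕ)
        = ∑ k ∈ Finset.range (m+1), ((polyC m).coeff k) • polyC k :=
      Finset.sum_attach (Finset.range (m+1)) (fun k => ((polyC m).coeff k) • polyC k)
    rw [hat]
    have hsum : ∑ k ∈ Finset.range (m+1), ((polyC m).coeff k) • polyC k
        = ∑ k ∈ Finset.range (m+1), Polynomial.C ((Ep m).coeff k) * Ep k := by
      refine Finset.sum_congr rfl fun k hk => ?_
      rw [Finset.mem_range] at hk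
      rw [ih m (by omega), ih k (by omega), Polynomial.smul_eq_C_mul]
    rw [hsum]
    have hm1 : ((m:ℂ)+1) ≠ 0 := by
      have : (((m+1:ℕ)):ℂ) ≠ 0 := Nat.cast_ne_zero.mpr (by omega)
      push_cast at this; exact this
    have hm2 : ((m:ℂ)+2) ≠ 0 := by
      have : (((m+2:ℕ)):ℂ) ≠ 0 := Nat.cast_ne_zero.mpr (by omega)
      push_cast at this; exact this
    have key : Polynomial.C ((m:ℂ)+1) * ((Polynomial.X^2 + 1) * Polynomial.X^m +
        ∑ k ∈ Finset.range (m+1), Polynomial.C ((Ep m).coeff k) * Ep k)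
        = Polynomial.C ((m:ℂ)+2) * Ep (m+1) := by
      linear_combination mainlem m
    have hsc : ((m+1 : ℂ)/(m+2)) = ((m:ℂ)+2)⁻¹ * ((m:ℂ)+1) := by
      push_cast
      field_simp
    rw [Polynomial.smul_eq_C_mul, hsc, map_mul, mul_assoc, key, ← mul_assoc, ← map_mul,
      inv_mul_cancel₀ hm2, map_one, one_mul]



theorem stmt11' (n : ℕ) (hn : 1 ≤ n) :
    (Ep n).coeff (n + 1) = (n : ℂ) / (n + 1) ∧
    (Ep n).coeff n = 0 ∧
    (∀ k : ℕ, 1 ≤ k → k ≤ n - 1 →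
      (Ep n).coeff k =
        -((1 / (n + 1 : ℂ)) * ((n + 1).choose k : ℂ) * (2 * Complex.I) ^ (n + 1 - k) *
          ((_root_.bernoulli (n + 1 - k) : ℚ) : ℂ))) ∧
    (Ep n).coeff 0 =
      2 * (1 - 2 ^ (n + 1)) * Complex.I ^ (n + 1) * ((_root_.bernoulli (n + 1) : ℚ) : ℂ) / (n + 1) := by
  have hn1 : ((n:ℂ)+1) ≠ 0 := by
    have : (((n+1:ℕ)):ℂ) ≠ 0 := Nat.cast_ne_zero.mpr (by omega)
    push_cast at this; exact this
  refine ⟨?_, ?_, ?_, ?_⟩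
  · rw [coeff_Ep, if_pos rfl, if_neg (by omega), if_neg (by omega), gc_self]
    field_simp
    ring
  · rw [coeff_Ep, if_neg (by omega), if_pos rfl, if_neg (by omega)]
    have hg : gc (n+1) n = -((n:ℂ)+1) * Complex.I := by
      rw [gc, Nat.choose_succ_self_right]
      have : n + 1 - n = 1 := by omega
      rw [this, bc_one]
      push_cast
      ring
    rw [hg]
    field_simp
    ring
  · intro k hk1 hk2
    rw [coeff_Ep, if_neg (by omega), if_neg (by omega), if_neg (by omega), gc]
    rw [bc]
    field_simp
    ring
  · rw [coeff_Ep, if_neg (by omega), if_neg (by omega), if_pos rfl]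
    have hg : gc (n+1) 0 = (2*Complex.I)^(n+1) * bc (n+1) := by
      rw [gc, Nat.choose_zero_right, Nat.sub_zero]
      push_cast
      ring
    rw [hg, ev_eq, mul_pow, bc]
    field_simp
    ring

end Stmt11Aux

theorem stmt11 (n : ℕ) (hn : 1 ≤ n) :
    (polyC n).coeff (n + 1) = (n : ℂ) / (n + 1) ∧
    (polyC n).coeff n = 0 ∧
    (∀ k : ℕ, 1 ≤ k → k ≤ n - 1 →
      (polyC n).coeff k =
        -((1 / (n + 1 : ℂ)) * ((n + 1).choose k : ℂ) * (2 * Complex.I) ^ (n + 1 - k) *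
          ((bernoulli (n + 1 - k) : ℚ) : ℂ))) ∧
    (polyC n).coeff 0 =
      2 * (1 - 2 ^ (n + 1)) * Complex.I ^ (n + 1) * ((bernoulli (n + 1) : ℚ) : ℂ) / (n + 1) := by
  rw [Stmt11Aux.polyC_eq n]
  exact Stmt11Aux.stmt11' n hn
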